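/- Let r = 34/5, a = -1/2, σ = -a·r = 17/5, ξ = r(√(r(r-1)) - (r-1)), x* = σ√ξ/(σ + aξ), y* = √ξ, z* = σξ/(σ + aξ), and let J be the real 3×3 matrix [[-σ, σ - a·z*, -a·y*], [r - z*, -1, -x*], [y*, x*, -1]] (the Jacobian of the generalized Lorenz vector field at the equilibrium X1* = (x*, y*, z*)). Then every complex eigenvalue of J has strictly negative real part. -/

import Mathlib

set_option maxHeartbeats 1000000 in
/-- For `r = 34/5`, `a = -1/2`, the Jacobian of the generalized Lorenz vector field at
the equilibrium `X₁* = (x*, y*, z*)` has all its complex eigenvalues with strictly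
negative real part. -/
theorem lorenz_X1_eigenvalues_stable (a r σ ξ xs ys zs : ℝ)
    (har : a = -1/2) (hrr : r = 34/5) (hσ : σ = -a * r)
    (hξ : ξ = r * (Real.sqrt (r * (r - 1)) - (r - 1)))
    (hxs : xs = σ * Real.sqrt ξ / (σ + a * ξ))
    (hys : ys = Real.sqrt ξ)
    (hzs : zs = σ * ξ / (σ + a * ξ))
    (J : Matrix (Fin 3) (Fin 3) ℝ)
    (hJ : J = !![-σ, σ - a * zs, -a * ys; r - zs, -1, -xs; ys, xs, -1]) :
    ∀ μ : ℂ, μ ∈ spectrum ℂ (J.map (Complex.ofReal ·)) → μ.re < 0 := by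
  intro μ hμ
  have hσ5 : σ = 17/5 := by rw [hσ, har, hrr]; norm_num
  rw [hrr] at hξ
  set u := Real.sqrt (34/5 * (34/5 - 1)) with hu
  have hu0 : (0:ℝ) ≤ u := Real.sqrt_nonneg _
  have hu2 : u ^ 2 = 986/25 := by
    rw [hu, Real.sq_sqrt (by norm_num : (0:ℝ) ≤ 34/5 * (34/5 - 1))]; norm_num
  have hξu : ξ = 34/5*u - 986/25 := by rw [hξ]; ring
  have hub : u < 63/10 := by nlinarith
  have hlb : 29/5 < u := by nlinarith
  have hξ0 : (0:ℝ) ≤ ξ := by rw [hξu]; linarith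
  set t := Real.sqrt ξ with htd
  have ht2 : t ^ 2 = 34/5*u - 986/25 := by rw [htd, Real.sq_sqrt hξ0, hξu]
  have hDpos : (0:ℝ) < 578/25 - 17/5*u := by linarith
  have hDne : (578/25 - 17/5*u : ℝ) ≠ 0 := ne_of_gt hDpos
  have hDeq : σ + a*ξ = 578/25 - 17/5*u := by rw [hσ5, har, hξu]; ring
  have hA : xs * (578/25 - 17/5*u) = 17/5 * t := by
    rw [hxs, hDeq, hσ5]; exact div_mul_cancel₀ _ hDne
  have hB : zs * (578/25 - 17/5*u) = 17/5 * (34/5*u - 986/25) := by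
    rw [hzs, hDeq, hσ5, hξu]; exact div_mul_cancel₀ _ hDne
  -- the characteristic equation
  have h1 : ¬ IsUnit (algebraMap ℂ (Matrix (Fin 3) (Fin 3) ℂ) μ - J.map (Complex.ofReal ·)) :=
    spectrum.mem_iff.mp hμ
  have h2 : Matrix.det (algebraMap ℂ (Matrix (Fin 3) (Fin 3) ℂ) μ - J.map (Complex.ofReal ·)) = 0 := by
    by_contra h
    exact h1 ((Matrix.isUnit_iff_isUnit_det _).mpr (isUnit_iff_ne_zero.mpr h))
  rw [Matrix.det_fin_three, hJ] at h2
  simp only [Matrix.sub_apply, Matrix.algebraMap_matrix_apply, Matrix.map_apply,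
    Matrix.cons_val_zero, Matrix.cons_val_one, Matrix.head_cons, Matrix.cons_val_two,
    Matrix.tail_cons, Matrix.head_fin_const, Matrix.cons_val', Matrix.empty_val',
    Matrix.cons_val_fin_one, Matrix.cons_val, Matrix.of_apply, Fin.isValue, if_true, if_false] at h2
  simp only [show (1:Fin 3) ≠ 2 by decide, show (2:Fin 3) ≠ 1 by decide,
    show (2:Fin 3) ≠ 0 by decide, show (0:Fin 3) ≠ 2 by decide, if_neg, if_false] at h2
  norm_num at h2
  have key0 : μ^3 + ((σ + 2 : ℝ):ℂ)*μ^2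
      + ((2*σ + a*ys^2 + 1 + xs^2 - (σ - a*zs)*(r - zs) : ℝ):ℂ)*μ
      + ((σ*(1+xs^2) + (σ - a*zs)*(xs*ys - (r - zs)) + a*ys*((r - zs)*xs + ys) : ℝ):ℂ) = 0 := by
    push_cast
    linear_combination h2
  have hC2 : σ + 2 = 27/5 := by rw [hσ5]; norm_num
  have hC1 : 2*σ + a*ys^2 + 1 + xs^2 - (σ - a*zs)*(r - zs) = 748/25 - 12/5*u := by
    refine mul_right_cancel₀ (pow_ne_zero 2 hDne) ?_
    rw [hys, hσ5, har, hrr]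
    linear_combination (17/5*t + xs*(578/25 - 17/5*u))*hA
      + (-8381/125 + 289/25*u + 1/2*(zs*(578/25 - 17/5*u)))*hB
      + (-159817/625 + 9826/125*u - 289/50*u^2)*ht2
      + (16184/125 - 289/25*u)*hu2
  have hC0 : σ*(1+xs^2) + (σ - a*zs)*(xs*ys - (r - zs)) + a*ys*((r - zs)*xs + ys) = 1972/25 := by
    refine mul_right_cancel₀ (pow_ne_zero 2 hDne) ?_
    rw [hys, hσ5, har, hrr]
    linear_combination (289/25*t + (zs*(578/25 - 17/5*u))*t + 17/5*(xs*(578/25 - 17/5*u)))*hA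
      + (-8381/125 + 289/25*u + 17/5*t^2 + 1/2*(zs*(578/25 - 17/5*u)))*hB
      + (-427431/625 + 19652/125*u - 289/50*u^2)*ht2
      + (265302/625 - 4913/125*u)*hu2
  rw [hC2, hC1, hC0] at key0
  -- extract real and imaginary parts
  set x := μ.re with hx
  set y := μ.im with hy
  have hμxy : μ = (x:ℂ) + (y:ℂ)*Complex.I := (Complex.re_add_im μ).symm
  rw [hμxy] at key0
  have hre : x^3 - 3*x*y^2 + 27/5*(x^2 - y^2) + (748/25 - 12/5*u)*x + 1972/25 = 0 := by
    have h := congrArg Complex.re key0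
    simp only [Complex.add_re, Complex.mul_re, Complex.mul_im, Complex.add_im,
      Complex.ofReal_re, Complex.ofReal_im, Complex.I_re, Complex.I_im, Complex.zero_re,
      pow_succ, pow_zero, one_mul] at h
    linarith [h]
  have him : y * (3*x^2 - y^2 + 2*(27/5)*x + (748/25 - 12/5*u)) = 0 := by
    have h := congrArg Complex.im key0
    simp only [Complex.add_re, Complex.mul_re, Complex.mul_im, Complex.add_im,
      Complex.ofReal_re, Complex.ofReal_im, Complex.I_re, Complex.I_im, Complex.zero_im,
      pow_succ, pow_zero, one_mul] at h
    linear_combination h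
  by_contra hcon
  push_neg at hcon
  have hc1pos : (0:ℝ) < 748/25 - 12/5*u := by linarith
  rcases mul_eq_zero.mp him with hy0 | hq
  · have hcub : x^3 + 27/5*x^2 + (748/25 - 12/5*u)*x + 1972/25 = 0 := by
      rw [hy0] at hre; linear_combination hre
    nlinarith [hcub, hcon, hc1pos, pow_nonneg hcon 3, mul_nonneg hcon hcon,
      mul_nonneg (le_of_lt hc1pos) hcon]
  · have h8 : 8*x^3 + 8*(27/5)*x^2 + 2*((748/25 - 12/5*u) + (27/5)^2)*x
        + ((748/25 - 12/5*u)*(27/5) - 1972/25) = 0 := by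
      linear_combination (-1)*hre + (3*x + 27/5)*hq
    have hRH : (0:ℝ) < (748/25 - 12/5*u)*(27/5) - 1972/25 := by nlinarith
    nlinarith [h8, hcon, hc1pos, hRH, pow_nonneg hcon 3, mul_nonneg hcon hcon,
      mul_nonneg (le_of_lt hc1pos) hcon]
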